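/- arXiv:0810.2010 — 4 statements merged into one kernel-verified Lean document; each statement's English description precedes it below -/
import Mathlib

section
/- For a Poisson random variable Y with mean μ > 0 and any bounded g : ℕ → ℝ, E[(Y - μ) · g(Y)] = E[Y · (g(Y) - g(Y-1))], where Y · g(Y-1) is interpreted as 0 when Y = 0. -/
open scoped BigOperators

noncomputable def poissonPMF (μ : ℝ) (k : ℕ) : ℝ :=
  Real.exp (-μ) * μ ^ k / (Nat.factorial k)

noncomputable def poissonWeight {N : ℕ} (μ : Fin N → ℝ) (y : Fin N → ℕ) : ℝ :=
  ∏ i, poissonPMF (μ i) (y i)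

theorem poisson_centered_identity (μ : ℝ) (hμ : 0 < μ) (g : ℕ → ℝ)
    (hbdd : ∃ C : ℝ, ∀ k, |g k| ≤ C) :
    ∑' k : ℕ, ((k : ℝ) - μ) * g k * poissonPMF μ k
      = ∑' k : ℕ, (k : ℝ) * (g k - g (k - 1)) * poissonPMF μ k := by
  obtain ⟨C, hC⟩ := hbdd
  have hC0 : 0 ≤ C := le_trans (abs_nonneg _) (hC 0)
  set p : ℕ → ℝ := poissonPMF μ with hp
  have hp_nonneg : ∀ k, 0 ≤ p k := by
    intro k
    unfold p
    unfold poissonPMF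
    positivity
  have hp_sum : Summable p := by
    have : p = fun k : ℕ => Real.exp (-μ) * (μ ^ k / (Nat.factorial k)) := by
      funext k; unfold p; unfold poissonPMF; ring
    rw [this]
    exact (Real.summable_pow_div_factorial μ).mul_left _
  have key : ∀ k : ℕ, ((k : ℝ) + 1) * p (k + 1) = μ * p k := by
    intro k
    unfold p
    unfold poissonPMF
    have h1 : (Nat.factorial (k + 1) : ℝ) = ((k : ℝ) + 1) * (Nat.factorial k : ℝ) := by
      push_cast [Nat.factorial_succ]; ring
    have h2 : (Nat.factorial k : ℝ) ≠ 0 := Nat.cast_ne_zero.mpr (Nat.factorial_ne_zero k)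
    have h3 : ((k : ℝ) + 1) ≠ 0 := by positivity
    rw [h1]
    field_simp
    ring
  have hkp : Summable (fun k : ℕ => (k : ℝ) * p k) := by
    rw [← summable_nat_add_iff 1]
    have : ∀ k : ℕ, ((k + 1 : ℕ) : ℝ) * p (k + 1) = μ * p k := by
      intro k; push_cast; exact key k
    simp only [this]
    exact hp_sum.mul_left μ
  -- summability of the three pieces
  have hCkp : Summable (fun k : ℕ => C * ((k : ℝ) * p k)) := hkp.mul_left C
  have hC_arg : Summable (fun k : ℕ => (k : ℝ) * g k * p k) := by
    apply Summable.of_norm_bounded hCkp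
    intro k
    have : ‖(k : ℝ) * g k * p k‖ = (k : ℝ) * p k * |g k| := by
      rw [Real.norm_eq_abs, abs_mul, abs_mul, abs_of_nonneg (Nat.cast_nonneg k),
        abs_of_nonneg (hp_nonneg k)]
      ring
    rw [this]
    calc (k : ℝ) * p k * |g k| ≤ (k : ℝ) * p k * C := by
          apply mul_le_mul_of_nonneg_left (hC k)
          exact mul_nonneg (Nat.cast_nonneg k) (hp_nonneg k)
      _ = C * ((k : ℝ) * p k) := by ring
  have hA : Summable (fun k : ℕ => (k : ℝ) * g (k - 1) * p k) := by
    apply Summable.of_norm_bounded hCkp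
    intro k
    have : ‖(k : ℝ) * g (k - 1) * p k‖ = (k : ℝ) * p k * |g (k - 1)| := by
      rw [Real.norm_eq_abs, abs_mul, abs_mul, abs_of_nonneg (Nat.cast_nonneg k),
        abs_of_nonneg (hp_nonneg k)]
      ring
    rw [this]
    calc (k : ℝ) * p k * |g (k - 1)| ≤ (k : ℝ) * p k * C := by
          apply mul_le_mul_of_nonneg_left (hC _)
          exact mul_nonneg (Nat.cast_nonneg k) (hp_nonneg k)
      _ = C * ((k : ℝ) * p k) := by ring
  have hB : Summable (fun k : ℕ => μ * g k * p k) := by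
    apply Summable.of_norm_bounded ((hp_sum.mul_left C).mul_left μ)
    intro k
    have : ‖μ * g k * p k‖ = μ * p k * |g k| := by
      rw [Real.norm_eq_abs, abs_mul, abs_mul, abs_of_nonneg hμ.le,
        abs_of_nonneg (hp_nonneg k)]
      ring
    rw [this]
    calc μ * p k * |g k| ≤ μ * p k * C := by
          apply mul_le_mul_of_nonneg_left (hC k)
          exact mul_nonneg hμ.le (hp_nonneg k)
      _ = μ * (C * p k) := by ring
  -- the shift identity
  have hshift : ∑' k : ℕ, (k : ℝ) * g (k - 1) * p k = ∑' k : ℕ, μ * g k * p k := by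
    rw [Summable.tsum_eq_zero_add hA]
    have h0 : (0 : ℝ) * g (0 - 1) * p 0 = 0 := by ring
    have hsucc : ∀ k : ℕ, ((k + 1 : ℕ) : ℝ) * g ((k + 1) - 1) * p (k + 1)
        = μ * g k * p k := by
      intro k
      have : (k + 1) - 1 = k := by omega
      rw [this]
      push_cast
      rw [mul_comm ((k : ℝ) + 1) (g k), mul_assoc, key k]
      ring
    simp only [Nat.cast_zero, h0, hsucc, zero_add]
  have e1 : ∀ k : ℕ, ((k : ℝ) - μ) * g k * p k
      = (k : ℝ) * g k * p k - μ * g k * p k := by intro k; ring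
  have e2 : ∀ k : ℕ, (k : ℝ) * (g k - g (k - 1)) * p k
      = (k : ℝ) * g k * p k - (k : ℝ) * g (k - 1) * p k := by intro k; ring
  calc ∑' k : ℕ, ((k : ℝ) - μ) * g k * p k
      = ∑' k : ℕ, ((k : ℝ) * g k * p k - μ * g k * p k) := by simp only [e1]
    _ = (∑' k : ℕ, (k : ℝ) * g k * p k) - ∑' k : ℕ, μ * g k * p k :=
        Summable.tsum_sub hC_arg hB
    _ = (∑' k : ℕ, (k : ℝ) * g k * p k) - ∑' k : ℕ, (k : ℝ) * g (k - 1) * p k := by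
        rw [hshift]
    _ = ∑' k : ℕ, ((k : ℝ) * g k * p k - (k : ℝ) * g (k - 1) * p k) :=
        (Summable.tsum_sub hC_arg hA).symm
    _ = ∑' k : ℕ, (k : ℝ) * (g k - g (k - 1)) * p k := by simp only [e2]
end

section
/- For a single Poisson observation Y with true mean μ_0 > 0, an independent replicate Y* ~ Poisson(μ_0), and a fitted-value function ŷ : ℕ → (0, ∞) that is bounded above and below away from 0, the following identity holds: E_Y E_{Y*}[ log g(Y* | ŷ(Y)) ] = E_Y[ log g(Y | ŷ(Y)) ] − E_Y[ Y log ŷ(Y) − Y log ŷ(Y − 1) ], where log g(y | m) = −m + y log m − log(y!) is the Poisson log-likelihood and Y log ŷ(Y−1) is 0 when Y = 0. -/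
open scoped BigOperators

noncomputable def poissonLogLik (y : ℕ) (m : ℝ) : ℝ :=
  -m + (y : ℝ) * Real.log m - Real.log (Nat.factorial y)

lemma pmf_nonneg {μ : ℝ} (hμ : 0 ≤ μ) (k : ℕ) : 0 ≤ poissonPMF μ k := by
  unfold poissonPMF; positivity

lemma pmf_summable (μ : ℝ) : Summable (poissonPMF μ) := by
  have h := (Real.summable_pow_div_factorial μ).mul_left (Real.exp (-μ))
  refine h.congr fun k => ?_
  simp [poissonPMF, mul_div_assoc]

lemma pmf_tsum (μ : ℝ) : ∑' k, poissonPMF μ k = 1 := by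
  have h : ∑' k : ℕ, μ ^ k / (Nat.factorial k : ℝ) = Real.exp μ := by
    rw [Real.exp_eq_exp_ℝ, NormedSpace.exp_eq_tsum_div]
  calc ∑' k, poissonPMF μ k
      = Real.exp (-μ) * ∑' k : ℕ, μ ^ k / (Nat.factorial k : ℝ) := by
        rw [← tsum_mul_left]
        exact tsum_congr fun k => by simp [poissonPMF, mul_div_assoc]
    _ = 1 := by rw [h, ← Real.exp_add]; simp

lemma pmf_succ (μ : ℝ) (k : ℕ) :
    ((k : ℝ) + 1) * poissonPMF μ (k + 1) = μ * poissonPMF μ k := by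
  unfold poissonPMF
  have hk : (Nat.factorial k : ℝ) ≠ 0 := by
    exact_mod_cast (Nat.factorial_pos k).ne'
  rw [Nat.factorial_succ]
  push_cast
  field_simp
  ring

lemma log_factorial_le_sq (k : ℕ) : Real.log (Nat.factorial k) ≤ (k : ℝ) ^ 2 := by
  rcases Nat.eq_zero_or_pos k with hk | hk
  · subst hk; simp
  · have h1 : (Nat.factorial k : ℝ) ≤ (k : ℝ) ^ k := by
      exact_mod_cast Nat.factorial_le_pow k
    have hkpos : (0 : ℝ) < (k : ℝ) := by exact_mod_cast hk
    have h2 : Real.log (Nat.factorial k) ≤ Real.log ((k : ℝ) ^ k) :=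
      Real.log_le_log (by exact_mod_cast Nat.factorial_pos k) h1
    rw [Real.log_pow] at h2
    have h3 : Real.log (k : ℝ) ≤ (k : ℝ) := by
      have := Real.log_le_sub_one_of_pos hkpos
      linarith
    calc Real.log (Nat.factorial k) ≤ (k : ℝ) * Real.log (k : ℝ) := h2
      _ ≤ (k : ℝ) * (k : ℝ) := by
          exact mul_le_mul_of_nonneg_left h3 (le_of_lt hkpos)
      _ = (k : ℝ) ^ 2 := by ring

theorem univariate_cAIC (μ₀ : ℝ) (hμ : 0 < μ₀) (yhat : ℕ → ℝ) (c C : ℝ)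
    (hc : 0 < c) (hbdd : ∀ k, c ≤ yhat k ∧ yhat k ≤ C) :
    ∑' k : ℕ, (∑' j : ℕ, poissonLogLik j (yhat k) * poissonPMF μ₀ j) * poissonPMF μ₀ k
      = (∑' k : ℕ, poissonLogLik k (yhat k) * poissonPMF μ₀ k)
        - ∑' k : ℕ,
            ((k : ℝ) * Real.log (yhat k) - (k : ℝ) * Real.log (yhat (k - 1))) *
              poissonPMF μ₀ k := by
  set p : ℕ → ℝ := poissonPMF μ₀ with hp
  have hp0 : ∀ k, 0 ≤ p k := pmf_nonneg hμ.le
  have S0 : Summable p := pmf_summable μ₀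
  have T0 : ∑' k, p k = 1 := pmf_tsum μ₀
  have shift : ∀ k : ℕ, ((k : ℝ) + 1) * p (k + 1) = μ₀ * p k := pmf_succ μ₀
  -- summability of k * p k
  have S1 : Summable (fun k : ℕ => (k : ℝ) * p k) := by
    have h : Summable (fun n : ℕ => ((n + 1 : ℕ) : ℝ) * p (n + 1)) := by
      refine (S0.mul_left μ₀).congr fun n => ?_
      push_cast
      rw [shift n]
    exact (summable_nat_add_iff 1).1 h
  have T1 : ∑' k : ℕ, (k : ℝ) * p k = μ₀ := by
    rw [Summable.tsum_eq_zero_add S1]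
    have h : ∀ n : ℕ, ((n + 1 : ℕ) : ℝ) * p (n + 1) = μ₀ * p n := by
      intro n; push_cast; rw [shift n]
    rw [tsum_congr h, tsum_mul_left, T0]
    simp
  -- summability of k^2 * p k
  have S2 : Summable (fun k : ℕ => (k : ℝ) ^ 2 * p k) := by
    have h : Summable (fun n : ℕ => ((n + 1 : ℕ) : ℝ) ^ 2 * p (n + 1)) := by
      refine ((S1.mul_left μ₀).add (S0.mul_left μ₀)).congr fun n => ?_
      push_cast
      calc μ₀ * ((n : ℝ) * p n) + μ₀ * p n = ((n : ℝ) + 1) * (μ₀ * p n) := by ring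
        _ = ((n : ℝ) + 1) * (((n : ℝ) + 1) * p (n + 1)) := by rw [shift n]
        _ = ((n : ℝ) + 1) ^ 2 * p (n + 1) := by ring
    exact (summable_nat_add_iff 1).1 h
  -- bounded multiplier principle
  have key : ∀ (b g : ℕ → ℝ) (M' : ℝ), Summable g → (∀ k, 0 ≤ g k) →
      (∀ k, |b k| ≤ M') → Summable (fun k => b k * g k) := by
    intro b g M' hg hg0 hb
    refine Summable.of_norm_bounded (hg.mul_left M') fun k => ?_
    rw [Real.norm_eq_abs, abs_mul, abs_of_nonneg (hg0 k)]
    exact mul_le_mul_of_nonneg_right (hb k) (hg0 k)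
  -- bound on log yhat
  set M : ℝ := max |Real.log c| |Real.log C| with hMdef
  have hy_pos : ∀ k, 0 < yhat k := fun k => lt_of_lt_of_le hc (hbdd k).1
  have hM : ∀ k, |Real.log (yhat k)| ≤ M := by
    intro k
    have h1 : Real.log c ≤ Real.log (yhat k) := Real.log_le_log hc (hbdd k).1
    have h2 : Real.log (yhat k) ≤ Real.log C := Real.log_le_log (hy_pos k) (hbdd k).2
    rcases le_or_gt 0 (Real.log (yhat k)) with h | h
    · rw [abs_of_nonneg h]
      exact le_trans (le_trans h2 (le_abs_self _)) (le_max_right _ _)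
    · rw [abs_of_neg h]
      have : -Real.log (yhat k) ≤ -Real.log c := neg_le_neg h1
      have h4 : -Real.log c ≤ |Real.log c| := neg_le_abs _
      exact le_trans (le_trans this h4) (le_max_left _ _)
  -- summabilities of all needed series
  have SE : Summable (fun k => yhat k * p k) := by
    refine key yhat p |C| S0 hp0 fun k => ?_
    rw [abs_of_pos (hy_pos k)]
    exact le_trans (hbdd k).2 (le_abs_self C)
  have SL : Summable (fun k => Real.log (yhat k) * p k) :=
    key _ p M S0 hp0 hM
  have S1nn : ∀ k : ℕ, 0 ≤ (k : ℝ) * p k := fun k => mul_nonneg (Nat.cast_nonneg k) (hp0 k)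
  have SKL : Summable (fun k : ℕ => ((k : ℝ) * Real.log (yhat k)) * p k) := by
    refine (key (fun k => Real.log (yhat k)) (fun k : ℕ => (k : ℝ) * p k) M S1 S1nn hM).congr
      fun k => ?_
    ring
  have SKLprev : Summable (fun k : ℕ => ((k : ℝ) * Real.log (yhat (k - 1))) * p k) := by
    refine (key (fun k => Real.log (yhat (k - 1))) (fun k : ℕ => (k : ℝ) * p k) M S1 S1nn
      (fun k => hM (k - 1))).congr fun k => ?_
    ring
  have SA : Summable (fun k : ℕ => Real.log (Nat.factorial k) * p k) := by
    refine Summable.of_norm_bounded S2 fun k => ?_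
    have hlf : 0 ≤ Real.log (Nat.factorial k) :=
      Real.log_nonneg (by exact_mod_cast Nat.one_le_iff_ne_zero.2 (Nat.factorial_pos k).ne')
    rw [Real.norm_eq_abs, abs_mul, abs_of_nonneg hlf, abs_of_nonneg (hp0 k)]
    exact mul_le_mul_of_nonneg_right (log_factorial_le_sq k) (hp0 k)
  -- named sums
  set E : ℝ := ∑' k, yhat k * p k with hE
  set L : ℝ := ∑' k, Real.log (yhat k) * p k with hL
  set A : ℝ := ∑' k : ℕ, Real.log (Nat.factorial k) * p k with hA
  set KL : ℝ := ∑' k : ℕ, ((k : ℝ) * Real.log (yhat k)) * p k with hKL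
  -- inner sum
  have inner : ∀ m : ℝ, ∑' j : ℕ, poissonLogLik j m * p j = -m + μ₀ * Real.log m - A := by
    intro m
    have h1 : ∀ j : ℕ, poissonLogLik j m * p j
        = ((-m) * p j + Real.log m * ((j : ℝ) * p j)) - Real.log (Nat.factorial j) * p j := by
      intro j; unfold poissonLogLik; ring
    rw [tsum_congr h1,
      Summable.tsum_sub ((S0.mul_left (-m)).add (S1.mul_left (Real.log m))) SA,
      Summable.tsum_add (S0.mul_left (-m)) (S1.mul_left (Real.log m)),
      tsum_mul_left, tsum_mul_left, T0, T1, ← hA]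
    ring
  -- shifted sum
  have Tprev : ∑' k : ℕ, ((k : ℝ) * Real.log (yhat (k - 1))) * p k = μ₀ * L := by
    rw [Summable.tsum_eq_zero_add SKLprev]
    have h : ∀ n : ℕ, (((n + 1 : ℕ) : ℝ) * Real.log (yhat ((n + 1) - 1))) * p (n + 1)
        = μ₀ * (Real.log (yhat n) * p n) := by
      intro n
      have h2 : (n + 1) - 1 = n := Nat.add_sub_cancel _ _
      rw [h2]
      push_cast
      calc ((n : ℝ) + 1) * Real.log (yhat n) * p (n + 1)
          = Real.log (yhat n) * (((n : ℝ) + 1) * p (n + 1)) := by ring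
        _ = Real.log (yhat n) * (μ₀ * p n) := by rw [shift n]
        _ = μ₀ * (Real.log (yhat n) * p n) := by ring
    rw [tsum_congr h, tsum_mul_left, ← hL]
    simp
  -- LHS
  have hLHS : ∑' k : ℕ, (∑' j : ℕ, poissonLogLik j (yhat k) * p j) * p k
      = -E + μ₀ * L - A := by
    have h1 : ∀ k : ℕ, (∑' j : ℕ, poissonLogLik j (yhat k) * p j) * p k
        = (-(yhat k * p k) + μ₀ * (Real.log (yhat k) * p k)) - A * p k := by
      intro k; rw [inner (yhat k)]; ring
    rw [tsum_congr h1,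
      Summable.tsum_sub ((SE.neg).add (SL.mul_left μ₀)) (S0.mul_left A),
      Summable.tsum_add SE.neg (SL.mul_left μ₀), tsum_neg, tsum_mul_left, tsum_mul_left, T0,
      ← hE, ← hL]
    ring
  -- RHS first sum
  have hRHS1 : ∑' k : ℕ, poissonLogLik k (yhat k) * p k = -E + KL - A := by
    have h1 : ∀ k : ℕ, poissonLogLik k (yhat k) * p k
        = (-(yhat k * p k) + ((k : ℝ) * Real.log (yhat k)) * p k)
          - Real.log (Nat.factorial k) * p k := by
      intro k; unfold poissonLogLik; ring
    rw [tsum_congr h1,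
      Summable.tsum_sub ((SE.neg).add SKL) SA,
      Summable.tsum_add SE.neg SKL, tsum_neg, ← hE, ← hKL, ← hA]
  -- RHS second sum
  have hRHS2 : ∑' k : ℕ,
      ((k : ℝ) * Real.log (yhat k) - (k : ℝ) * Real.log (yhat (k - 1))) * p k
      = KL - μ₀ * L := by
    have h1 : ∀ k : ℕ,
        ((k : ℝ) * Real.log (yhat k) - (k : ℝ) * Real.log (yhat (k - 1))) * p k
        = ((k : ℝ) * Real.log (yhat k)) * p k
          - ((k : ℝ) * Real.log (yhat (k - 1))) * p k := by
      intro k; ring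
    rw [tsum_congr h1, Summable.tsum_sub SKL SKLprev, Tprev, ← hKL]
  rw [hLHS, hRHS1, hRHS2]
  ring
end

section
/- Let Y_1, …, Y_N be independent with Y_i ~ Poisson(μ_{0i}), μ_{0i} > 0, let Y* = (Y*_1, …, Y*_N) be an independent replicate with the same means, and let ŷ_i : ℕ^N → [c, C] with 0 < c ≤ C < ∞ be fitted-value functions. Define cAI = −2 E_Y E_{Y*}[∑_i (−ŷ_i(Y) + Y*_i log ŷ_i(Y) − log(Y*_i !))]. Then cAI = −2 E_Y[∑_i (−ŷ_i(Y) + Y_i log ŷ_i(Y) − log(Y_i !))] + 2 E_Y[∑_i (Y_i log ŷ_i(Y) − Y_i log ŷ_i(Y^{(Y_i−1)}))], where Y^{(Y_i−1)} replaces the i-th coordinate of Y by Y_i − 1 and terms with Y_i = 0 vanish. -/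
open scoped BigOperators

set_option maxHeartbeats 1000000

namespace CAIC

lemma pois_nonneg {μ : ℝ} (hμ : 0 ≤ μ) (k : ℕ) : 0 ≤ poissonPMF μ k := by
  unfold poissonPMF; positivity

lemma pois_hasSum {μ : ℝ} (hμ : 0 ≤ μ) : HasSum (poissonPMF μ) 1 := by
  have h := ProbabilityTheory.poissonPMFRealSum ⟨μ, hμ⟩
  exact h

lemma pois_succ (μ : ℝ) (k : ℕ) :
    ((k + 1 : ℕ) : ℝ) * poissonPMF μ (k + 1) = μ * poissonPMF μ k := by
  unfold poissonPMF
  have h2 : (Nat.factorial k : ℝ) ≠ 0 := by positivity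
  rw [Nat.factorial_succ]
  push_cast
  field_simp
  ring

lemma pois_mean {μ : ℝ} (hμ : 0 ≤ μ) : HasSum (fun k : ℕ => (k : ℝ) * poissonPMF μ k) μ := by
  have key : HasSum (fun k : ℕ => ((k + 1 : ℕ) : ℝ) * poissonPMF μ (k + 1)) μ := by
    have hs := (pois_hasSum hμ).mul_left μ
    rw [mul_one] at hs
    simpa only [pois_succ] using hs
  simpa using (hasSum_nat_add_iff (f := fun k : ℕ => (k : ℝ) * poissonPMF μ k) 1).mp key

lemma summable_bdd_mul {α : Type*} {G H : α → ℝ} {M : ℝ}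
    (hG : ∀ a, |G a| ≤ M) (hH : ∀ a, 0 ≤ H a) (h : Summable H) :
    Summable fun a => G a * H a := by
  apply Summable.of_abs
  apply Summable.of_nonneg_of_le (fun a => abs_nonneg _) (fun a => ?_) (h.mul_left M)
  rw [abs_mul, abs_of_nonneg (hH a)]
  exact mul_le_mul_of_nonneg_right (hG a) (hH a)

lemma nat_sq_le (k : ℕ) : k ^ 2 ≤ 4 * 2 ^ k := by
  induction k with
  | zero => norm_num
  | succ k ih =>
    have h1 : k ≤ 2 ^ k := Nat.le_of_lt (Nat.lt_two_pow_self (n := k))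
    have h2 : 1 ≤ 2 ^ k := Nat.one_le_two_pow
    ring_nf
    ring_nf at ih
    omega

lemma summable_sq_pois {μ : ℝ} (hμ : 0 ≤ μ) :
    Summable (fun k : ℕ => ((k : ℝ)) ^ 2 * poissonPMF μ k) := by
  have hb : Summable (fun k : ℕ => (4 * Real.exp (-μ)) * ((2 * μ) ^ k / (Nat.factorial k))) :=
    (Real.summable_pow_div_factorial (2 * μ)).mul_left _
  apply Summable.of_nonneg_of_le (fun k => mul_nonneg (by positivity) (pois_nonneg hμ k)) (fun k => ?_) hb
  · unfold poissonPMF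
    have h1 : ((k : ℝ)) ^ 2 ≤ 4 * 2 ^ k := by exact_mod_cast nat_sq_le k
    have h2 : (0:ℝ) ≤ Real.exp (-μ) * μ ^ k / (Nat.factorial k) := pois_nonneg hμ k
    calc ((k : ℝ)) ^ 2 * (Real.exp (-μ) * μ ^ k / (Nat.factorial k))
        ≤ (4 * 2 ^ k) * (Real.exp (-μ) * μ ^ k / (Nat.factorial k)) := by
          exact mul_le_mul_of_nonneg_right h1 h2
      _ = (4 * Real.exp (-μ)) * ((2 * μ) ^ k / (Nat.factorial k)) := by
          rw [mul_pow]; ring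


lemma logfact_nonneg (k : ℕ) : 0 ≤ Real.log (Nat.factorial k) := by
  apply Real.log_nonneg
  exact_mod_cast Nat.one_le_iff_ne_zero.mpr (Nat.factorial_ne_zero k)

lemma logfact_le (k : ℕ) : Real.log (Nat.factorial k) ≤ (k : ℝ) ^ 2 := by
  have h1 : (Nat.factorial k : ℝ) ≤ (k : ℝ) ^ k := by exact_mod_cast Nat.factorial_le_pow k
  have h2 : Real.log (Nat.factorial k) ≤ Real.log ((k : ℝ) ^ k) := by
    apply Real.log_le_log (by positivity) h1
  calc Real.log (Nat.factorial k) ≤ Real.log ((k : ℝ) ^ k) := h2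
    _ = (k : ℝ) * Real.log k := by rw [Real.log_pow]
    _ ≤ (k : ℝ) * (k : ℝ) := by
        apply mul_le_mul_of_nonneg_left (Real.log_le_self (by positivity)) (by positivity)
    _ = (k : ℝ) ^ 2 := by ring

lemma summable_logfact_pois {μ : ℝ} (hμ : 0 ≤ μ) :
    Summable (fun k : ℕ => Real.log (Nat.factorial k) * poissonPMF μ k) := by
  apply Summable.of_nonneg_of_le
    (fun k => mul_nonneg (logfact_nonneg k) (pois_nonneg hμ k))
    (fun k => mul_le_mul_of_nonneg_right (logfact_le k) (pois_nonneg hμ k))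
    (summable_sq_pois hμ)

lemma shift_summable {μ : ℝ} (hμ : 0 ≤ μ) {u : ℕ → ℝ} {M : ℝ} (hu : ∀ m, |u m| ≤ M) :
    Summable (fun k : ℕ => (k : ℝ) * u (k - 1) * poissonPMF μ k) := by
  have hup : Summable (fun k => u k * poissonPMF μ k) :=
    summable_bdd_mul hu (pois_nonneg hμ) (pois_hasSum hμ).summable
  have hfs : (fun k : ℕ => ((k + 1 : ℕ) : ℝ) * u ((k + 1) - 1) * poissonPMF μ (k + 1))
      = fun k : ℕ => μ * (u k * poissonPMF μ k) := by
    funext k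
    rw [Nat.add_sub_cancel]
    linear_combination u k * pois_succ μ k
  have hsucc : Summable (fun k : ℕ =>
      ((k + 1 : ℕ) : ℝ) * u ((k + 1) - 1) * poissonPMF μ (k + 1)) := by
    rw [hfs]; exact hup.mul_left μ
  exact (summable_nat_add_iff 1).mp (by exact_mod_cast hsucc)

lemma shift_tsum {μ : ℝ} (hμ : 0 ≤ μ) {u : ℕ → ℝ} {M : ℝ} (hu : ∀ m, |u m| ≤ M) :
    ∑' k : ℕ, (k : ℝ) * u (k - 1) * poissonPMF μ k
      = μ * ∑' k : ℕ, u k * poissonPMF μ k := by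
  have hup : Summable (fun k => u k * poissonPMF μ k) :=
    summable_bdd_mul hu (pois_nonneg hμ) (pois_hasSum hμ).summable
  have hf := shift_summable hμ hu
  rw [hf.tsum_eq_zero_add]
  have hfs : (fun k : ℕ => ((k + 1 : ℕ) : ℝ) * u ((k + 1) - 1) * poissonPMF μ (k + 1))
      = fun k : ℕ => μ * (u k * poissonPMF μ k) := by
    funext k
    rw [Nat.add_sub_cancel]
    linear_combination u k * pois_succ μ k
  simp only [Nat.cast_zero, zero_mul, zero_add]
  calc ∑' k : ℕ, ((k + 1 : ℕ) : ℝ) * u ((k + 1) - 1) * poissonPMF μ (k + 1)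
      = ∑' k : ℕ, μ * (u k * poissonPMF μ k) := by rw [hfs]
    _ = μ * ∑' k : ℕ, u k * poissonPMF μ k := tsum_mul_left

lemma pi_hasSum_fin : ∀ (n : ℕ) (g : Fin n → ℕ → ℝ), (∀ j, Summable (g j)) →
    HasSum (fun y : Fin n → ℕ => ∏ j, g j (y j)) (∏ j, ∑' k, g j k) := by
  intro n
  induction n with
  | zero =>
    intro g hg
    simpa using hasSum_fintype (fun y : Fin 0 → ℕ => ∏ j, g j (y j))
  | succ n ih =>
    intro g hg
    have h1 : HasSum (g 0) (∑' k, g 0 k) := (hg 0).hasSum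
    have h2 := ih (fun j => g j.succ) (fun j => hg _)
    have habs := ih (fun j k => |g j.succ k|) (fun j => summable_abs_iff.mpr (hg j.succ))
    have hnorm : Summable (fun z : Fin n → ℕ => ‖∏ j, g j.succ (z j)‖) := by
      apply habs.summable.congr
      intro z
      rw [Real.norm_eq_abs, Finset.abs_prod]
    have hnorm0 : Summable (fun k : ℕ => ‖g 0 k‖) :=
      (summable_abs_iff.mpr (hg 0)).congr (fun k => (Real.norm_eq_abs _).symm)
    have hprod : Summable (fun q : ℕ × (Fin n → ℕ) => g 0 q.1 * ∏ j : Fin n, g j.succ (q.2 j)) :=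
      summable_mul_of_summable_norm (f := g 0) (g := fun z : Fin n → ℕ => ∏ j : Fin n, g j.succ (z j)) hnorm0 hnorm
    have hmul : HasSum (fun q : ℕ × (Fin n → ℕ) => g 0 q.1 * ∏ j : Fin n, g j.succ (q.2 j))
        ((∑' k, g 0 k) * ∏ j : Fin n, ∑' k, g j.succ k) :=
      HasSum.mul (f := g 0) (g := fun z : Fin n → ℕ => ∏ j : Fin n, g j.succ (z j)) h1 h2 hprod
    have e := (Fin.consEquiv fun _ : Fin (n+1) => ℕ).symm
    have key := (Equiv.hasSum_iff (Fin.consEquiv fun _ : Fin (n+1) => ℕ).symm).mpr hmul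
    have hfun : ((fun q : ℕ × (Fin n → ℕ) => g 0 q.1 * ∏ j : Fin n, g j.succ (q.2 j))
        ∘ (Fin.consEquiv fun _ : Fin (n+1) => ℕ).symm) = fun y : Fin (n+1) → ℕ => ∏ j, g j (y j) := by
      funext y
      simp [Fin.consEquiv, Fin.prod_univ_succ, Fin.tail]
    rw [hfun] at key
    rw [Fin.prod_univ_succ]
    exact key

lemma pi_hasSum {ι : Type*} [Fintype ι] (g : ι → ℕ → ℝ) (hg : ∀ j, Summable (g j)) :
    HasSum (fun y : ι → ℕ => ∏ j, g j (y j)) (∏ j, ∑' k, g j k) := by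
  classical
  set e := Fintype.equivFin ι
  have h := pi_hasSum_fin _ (fun j => g (e.symm j)) (fun j => hg _)
  set E : (ι → ℕ) ≃ (Fin (Fintype.card ι) → ℕ) := Equiv.arrowCongr e (Equiv.refl ℕ) with hE
  have key := (Equiv.hasSum_iff E).mpr h
  have hfun : ((fun y : Fin (Fintype.card ι) → ℕ => ∏ j, g (e.symm j) (y j)) ∘ E)
      = fun y : ι → ℕ => ∏ j, g j (y j) := by
    funext y
    have : ∀ j, (E y) j = y (e.symm j) := by intro j; simp [hE, Equiv.arrowCongr]
    calc ∏ j, g (e.symm j) ((E y) j) = ∏ j, g (e.symm j) (y (e.symm j)) := by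
          apply Finset.prod_congr rfl; intro j _; rw [this]
      _ = ∏ i, g i (y i) := Equiv.prod_comp e.symm (fun i => g i (y i))
  have hval : (∏ j, ∑' k, g (e.symm j) k) = ∏ i, ∑' k, g i k :=
    Equiv.prod_comp e.symm (fun i => ∑' k, g i k)
  rw [hfun, hval] at key
  exact key

lemma weight_hasSum {N : ℕ} {μ : Fin N → ℝ} (hμ : ∀ i, 0 < μ i) :
    HasSum (poissonWeight μ) 1 := by
  have h := pi_hasSum (fun j : Fin N => poissonPMF (μ j))
    (fun j => (pois_hasSum (hμ j).le).summable)
  have hval : (∏ j : Fin N, ∑' k, poissonPMF (μ j) k) = 1 := by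
    apply Finset.prod_eq_one
    intro j _
    exact (pois_hasSum (hμ j).le).tsum_eq
  rw [hval] at h
  exact h

lemma weight_nonneg {N : ℕ} {μ : Fin N → ℝ} (hμ : ∀ i, 0 < μ i) (y : Fin N → ℕ) :
    0 ≤ poissonWeight μ y :=
  Finset.prod_nonneg (fun j _ => pois_nonneg (hμ j).le (y j))

lemma marg {N : ℕ} {μ : Fin N → ℝ} (hμ : ∀ i, 0 < μ i) (i : Fin N) (h : ℕ → ℝ)
    (hh : Summable (fun k => h k * poissonPMF (μ i) k)) :
    HasSum (fun y : Fin N → ℕ => h (y i) * poissonWeight μ y)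
      (∑' k, h k * poissonPMF (μ i) k) := by
  classical
  set g : Fin N → ℕ → ℝ :=
    fun j k => if j = i then h k * poissonPMF (μ j) k else poissonPMF (μ j) k with hgdef
  have hg : ∀ j, Summable (g j) := by
    intro j
    by_cases hj : j = i
    · subst hj; simpa [hgdef] using hh
    · simpa [hgdef, hj] using (pois_hasSum (hμ j).le).summable
  have H := pi_hasSum g hg
  have hfun : (fun y : Fin N → ℕ => ∏ j, g j (y j))
      = fun y : Fin N → ℕ => h (y i) * poissonWeight μ y := by
    funext y
    rw [Fintype.prod_eq_prod_compl_mul i]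
    unfold poissonWeight
    rw [Fintype.prod_eq_prod_compl_mul i (fun j => poissonPMF (μ j) (y j))]
    have hcompl : ∏ j ∈ ({i}ᶜ : Finset (Fin N)), g j (y j)
        = ∏ j ∈ ({i}ᶜ : Finset (Fin N)), poissonPMF (μ j) (y j) := by
      apply Finset.prod_congr rfl
      intro j hj
      have : j ≠ i := by simpa using hj
      simp [hgdef, this]
    rw [hcompl]
    simp [hgdef]
    ring
  have hval : (∏ j, ∑' k, g j k) = ∑' k, h k * poissonPMF (μ i) k := by
    rw [Fintype.prod_eq_prod_compl_mul i]
    have hcompl : ∏ j ∈ ({i}ᶜ : Finset (Fin N)), (∑' k, g j k) = 1 := by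
      apply Finset.prod_eq_one
      intro j hj
      have hji : j ≠ i := by simpa using hj
      have : (fun k => g j k) = poissonPMF (μ j) := by
        funext k; simp [hgdef, hji]
      rw [this]
      exact (pois_hasSum (hμ j).le).tsum_eq
    rw [hcompl]
    simp [hgdef]
  rw [hfun, hval] at H
  exact H

section Split
variable {N : ℕ} (i : Fin N)

lemma split_eval_self (k : ℕ) (z : {j : Fin N // j ≠ i} → ℕ) :
    ((Equiv.funSplitAt i ℕ).symm (k, z)) i = k := by
  simp

lemma split_update (k m : ℕ) (z : {j : Fin N // j ≠ i} → ℕ) :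
    Function.update ((Equiv.funSplitAt i ℕ).symm (k, z)) i m
      = (Equiv.funSplitAt i ℕ).symm (m, z) := by
  funext j
  by_cases hj : j = i
  · subst hj; simp
  · simp [Function.update, hj]

lemma weight_split {μ : Fin N → ℝ} (k : ℕ) (z : {j : Fin N // j ≠ i} → ℕ) :
    poissonWeight μ ((Equiv.funSplitAt i ℕ).symm (k, z))
      = poissonPMF (μ i) k * ∏ j : {j : Fin N // j ≠ i}, poissonPMF (μ j) (z j) := by
  classical
  unfold poissonWeight
  rw [Fintype.prod_eq_prod_compl_mul i]
  have h1 : ∏ j ∈ ({i}ᶜ : Finset (Fin N)),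
      poissonPMF (μ j) (((Equiv.funSplitAt i ℕ).symm (k, z)) j)
      = ∏ j : {j : Fin N // j ≠ i}, poissonPMF (μ j) (z j) := by
    rw [Finset.prod_subtype (p := fun j => j ≠ i) ({i}ᶜ : Finset (Fin N)) (by simp)
      (fun j => poissonPMF (μ j) (((Equiv.funSplitAt i ℕ).symm (k, z)) j))]
    apply Finset.prod_congr rfl
    intro j _
    congr 1
    simp [j.2]
  rw [h1, split_eval_self]
  ring
end Split

lemma tsum_swap {β γ : Type*} (f : β × γ → ℝ) (hf : Summable f) :
    ∑' p : β × γ, f p = ∑' c, ∑' b, f (b, c) := by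
  rw [← (Equiv.prodComm γ β).tsum_eq f]
  have h1 : Summable (fun p : γ × β => f p.swap) := hf.prod_symm
  erw [h1.tsum_prod' (fun c => h1.prod_factor c)]
  rfl

variable {N : ℕ} {μ : Fin N → ℝ}

lemma stein (hμ : ∀ i, 0 < μ i) (i : Fin N)
    (g : (Fin N → ℕ) → ℝ) (M : ℝ) (hg : ∀ y, |g y| ≤ M) :
    ∑' y : Fin N → ℕ, (y i : ℝ) * g (Function.update y i (y i - 1)) * poissonWeight μ y
      = μ i * ∑' y : Fin N → ℕ, g y * poissonWeight μ y := by
  classical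
  have hμi := (hμ i).le
  have hM : 0 ≤ M := le_trans (abs_nonneg _) (hg (fun _ => 0))
  set Z := ({j : Fin N // j ≠ i} → ℕ)
  set Q : Z → ℝ := fun z => ∏ j : {j : Fin N // j ≠ i}, poissonPMF (μ j) (z j) with hQdef
  have hQsum : HasSum Q 1 := by
    have h := pi_hasSum (fun j : {j : Fin N // j ≠ i} => poissonPMF (μ j))
      (fun j => (pois_hasSum (hμ j).le).summable)
    have hval : (∏ j : {j : Fin N // j ≠ i}, ∑' k, poissonPMF (μ (j : Fin N)) k) = 1 :=
      Finset.prod_eq_one (fun j _ => (pois_hasSum (hμ j).le).tsum_eq)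
    rw [hval] at h
    exact h
  have hQ0 : ∀ z, 0 ≤ Q z :=
    fun z => Finset.prod_nonneg (fun j _ => pois_nonneg (hμ j).le (z j))
  set F : ℕ × Z → ℝ := fun q =>
    ((q.1 : ℝ) * g ((Equiv.funSplitAt i ℕ).symm (q.1 - 1, q.2)) * poissonPMF (μ i) q.1) * Q q.2
    with hFdef
  set G : ℕ × Z → ℝ := fun q =>
    (g ((Equiv.funSplitAt i ℕ).symm q) * poissonPMF (μ i) q.1) * Q q.2 with hGdef
  -- summability of F
  have hFsum : Summable F := by
    apply Summable.of_abs
    have hbig : Summable (fun q : ℕ × Z => (M * ((q.1 : ℝ) * poissonPMF (μ i) q.1)) * Q q.2) :=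
      Summable.mul_of_nonneg (((pois_mean hμi).summable).mul_left M) hQsum.summable
        (fun k => mul_nonneg hM (mul_nonneg (Nat.cast_nonneg _) (pois_nonneg hμi k)))
        (fun z => hQ0 z)
    apply Summable.of_nonneg_of_le (fun q => abs_nonneg _) (fun q => ?_) hbig
    rw [hFdef]
    simp only
    rw [abs_mul, abs_of_nonneg (hQ0 _), abs_mul, abs_mul,
      abs_of_nonneg (Nat.cast_nonneg (α := ℝ) _), abs_of_nonneg (pois_nonneg hμi _)]
    have hgle := hg ((Equiv.funSplitAt i ℕ).symm (q.1 - 1, q.2))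
    have h0 : (0:ℝ) ≤ (q.1 : ℝ) := Nat.cast_nonneg _
    have hp := pois_nonneg hμi q.1
    have hq0 := hQ0 q.2
    calc (q.1 : ℝ) * |g ((Equiv.funSplitAt i ℕ).symm (q.1 - 1, q.2))| * poissonPMF (μ i) q.1 * Q q.2
        ≤ (q.1 : ℝ) * M * poissonPMF (μ i) q.1 * Q q.2 :=
          mul_le_mul_of_nonneg_right (mul_le_mul_of_nonneg_right
            (mul_le_mul_of_nonneg_left hgle h0) hp) hq0
      _ = M * ((q.1 : ℝ) * poissonPMF (μ i) q.1) * Q q.2 := by ring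
  have hGsum : Summable G := by
    apply Summable.of_abs
    have hbig : Summable (fun q : ℕ × Z => (M * poissonPMF (μ i) q.1) * Q q.2) :=
      Summable.mul_of_nonneg ((pois_hasSum hμi).summable.mul_left M) hQsum.summable
        (fun k => mul_nonneg hM (pois_nonneg hμi k)) (fun z => hQ0 z)
    apply Summable.of_nonneg_of_le (fun q => abs_nonneg _) (fun q => ?_) hbig
    rw [hGdef]
    simp only
    rw [abs_mul, abs_of_nonneg (hQ0 _), abs_mul, abs_of_nonneg (pois_nonneg hμi _)]
    have hgle := hg ((Equiv.funSplitAt i ℕ).symm q)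
    have hp := pois_nonneg hμi q.1
    have hq0 := hQ0 q.2
    exact mul_le_mul_of_nonneg_right (mul_le_mul_of_nonneg_right hgle hp) hq0
  -- rewrite LHS
  have hL : ∑' y : Fin N → ℕ, (y i : ℝ) * g (Function.update y i (y i - 1)) * poissonWeight μ y
      = ∑' q : ℕ × Z, F q := by
    rw [← Equiv.tsum_eq (Equiv.funSplitAt i ℕ).symm
      (fun y => (y i : ℝ) * g (Function.update y i (y i - 1)) * poissonWeight μ y)]
    apply tsum_congr
    rintro ⟨k, z⟩
    rw [hFdef]
    simp only
    rw [split_eval_self, split_update, weight_split]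
    ring
  have hR : ∑' y : Fin N → ℕ, g y * poissonWeight μ y = ∑' q : ℕ × Z, G q := by
    rw [← Equiv.tsum_eq (Equiv.funSplitAt i ℕ).symm (fun y => g y * poissonWeight μ y)]
    apply tsum_congr
    rintro ⟨k, z⟩
    rw [hGdef]
    simp only
    rw [weight_split]
    ring
  rw [hL, hR, tsum_swap F hFsum, tsum_swap G hGsum]
  rw [← tsum_mul_left]
  apply tsum_congr
  intro z
  have hu : ∀ m : ℕ, |g ((Equiv.funSplitAt i ℕ).symm (m, z))| ≤ M :=
    fun m => hg _
  calc ∑' k : ℕ, F (k, z)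
      = ∑' k : ℕ, ((k : ℝ) * g ((Equiv.funSplitAt i ℕ).symm (k - 1, z))
          * poissonPMF (μ i) k) * Q z := by rw [hFdef]
    _ = (∑' k : ℕ, (k : ℝ) * g ((Equiv.funSplitAt i ℕ).symm (k - 1, z))
          * poissonPMF (μ i) k) * Q z := tsum_mul_right
    _ = (μ i * ∑' k : ℕ, g ((Equiv.funSplitAt i ℕ).symm (k, z))
          * poissonPMF (μ i) k) * Q z := by rw [shift_tsum hμi hu]
    _ = μ i * ∑' k : ℕ, G (k, z) := by
        rw [hGdef]
        simp only
        rw [tsum_mul_right]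
        ring


end CAIC

open CAIC

theorem conditional_AIC_unbiased {N : ℕ} (μ₀ : Fin N → ℝ) (hμ : ∀ i, 0 < μ₀ i)
    (yhat : Fin N → (Fin N → ℕ) → ℝ) (c C : ℝ) (hc : 0 < c) (hcC : c ≤ C)
    (hbdd : ∀ i y, c ≤ yhat i y ∧ yhat i y ≤ C) :
    -2 * ∑' y : Fin N → ℕ,
        (∑' ystar : Fin N → ℕ,
            (∑ i, (-(yhat i y) + (ystar i : ℝ) * Real.log (yhat i y)
              - Real.log (Nat.factorial (ystar i)))) * poissonWeight μ₀ ystar) *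
          poissonWeight μ₀ y
      = -2 * (∑' y : Fin N → ℕ,
            (∑ i, (-(yhat i y) + (y i : ℝ) * Real.log (yhat i y)
              - Real.log (Nat.factorial (y i)))) * poissonWeight μ₀ y)
        + 2 * ∑' y : Fin N → ℕ,
            (∑ i, ((y i : ℝ) * Real.log (yhat i y)
              - (y i : ℝ) * Real.log (yhat i (Function.update y i (y i - 1))))) *
              poissonWeight μ₀ y := by
  classical
  have hP : HasSum (poissonWeight μ₀) 1 := weight_hasSum hμ
  have hP0 : ∀ y, 0 ≤ poissonWeight μ₀ y := weight_nonneg hμ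
  set M : ℝ := max |Real.log c| |Real.log C| with hMdef
  have hlog : ∀ (i : Fin N) (y : Fin N → ℕ), |Real.log (yhat i y)| ≤ M := by
    intro i y
    have h1 := (hbdd i y).1
    have h2 := (hbdd i y).2
    have hpos : 0 < yhat i y := lt_of_lt_of_le hc h1
    rw [abs_le]
    constructor
    · have ha : Real.log c ≤ Real.log (yhat i y) := Real.log_le_log hc h1
      have h3 : -|Real.log c| ≤ Real.log c := neg_abs_le _
      have h4 : |Real.log c| ≤ M := le_max_left _ _
      linarith
    · have ha : Real.log (yhat i y) ≤ Real.log C := Real.log_le_log hpos h2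
      have h4 : |Real.log C| ≤ M := le_max_right _ _
      have h5 : Real.log C ≤ |Real.log C| := le_abs_self _
      linarith
  have hyb : ∀ (i : Fin N) (y : Fin N → ℕ), |yhat i y| ≤ C := by
    intro i y
    rw [abs_of_pos (lt_of_lt_of_le hc (hbdd i y).1)]
    exact (hbdd i y).2
  -- summable building blocks
  have s_yhat : ∀ i : Fin N, Summable (fun y : Fin N → ℕ => yhat i y * poissonWeight μ₀ y) :=
    fun i => summable_bdd_mul (hyb i) hP0 hP.summable
  have s_L : ∀ i : Fin N,
      Summable (fun y : Fin N → ℕ => Real.log (yhat i y) * poissonWeight μ₀ y) :=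
    fun i => summable_bdd_mul (hlog i) hP0 hP.summable
  have hm1 : ∀ i : Fin N,
      HasSum (fun y : Fin N → ℕ => ((y i : ℝ)) * poissonWeight μ₀ y) (μ₀ i) := by
    intro i
    have h := marg hμ i (fun k => (k : ℝ)) (pois_mean (hμ i).le).summable
    rwa [(pois_mean (hμ i).le).tsum_eq] at h
  have hm2 : ∀ i : Fin N,
      HasSum (fun y : Fin N → ℕ => Real.log (Nat.factorial (y i)) * poissonWeight μ₀ y)
        (∑' k, Real.log (Nat.factorial k) * poissonPMF (μ₀ i) k) :=
    fun i => marg hμ i (fun k => Real.log (Nat.factorial k)) (summable_logfact_pois (hμ i).le)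
  have s_yL : ∀ i : Fin N, Summable
      (fun y : Fin N → ℕ => (y i : ℝ) * Real.log (yhat i y) * poissonWeight μ₀ y) := by
    intro i
    have h := summable_bdd_mul (hlog i)
      (fun y => mul_nonneg (Nat.cast_nonneg _) (hP0 y)) (hm1 i).summable
    exact h.congr (fun y => by ring)
  have s_yL' : ∀ i : Fin N, Summable
      (fun y : Fin N → ℕ => (y i : ℝ) *
        Real.log (yhat i (Function.update y i (y i - 1))) * poissonWeight μ₀ y) := by
    intro i
    have h := summable_bdd_mul (G := fun y : Fin N → ℕ =>
        Real.log (yhat i (Function.update y i (y i - 1)))) (fun y => hlog i _)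
      (fun y => mul_nonneg (Nat.cast_nonneg _) (hP0 y)) (hm1 i).summable
    exact h.congr (fun y => by ring)
  -- the three per-coordinate HasSum identities with common value V i
  have hA : ∀ i : Fin N, HasSum (fun y : Fin N → ℕ =>
      (-(yhat i y) + μ₀ i * Real.log (yhat i y)
        - (∑' k, Real.log (Nat.factorial k) * poissonPMF (μ₀ i) k)) * poissonWeight μ₀ y)
      (-(∑' y : Fin N → ℕ, yhat i y * poissonWeight μ₀ y)
        + μ₀ i * (∑' y : Fin N → ℕ, Real.log (yhat i y) * poissonWeight μ₀ y)
        - (∑' k, Real.log (Nat.factorial k) * poissonPMF (μ₀ i) k)) := by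
    intro i
    have h1 := (s_yhat i).hasSum.neg
    have h2 := (s_L i).hasSum.mul_left (μ₀ i)
    have h3 := hP.mul_left (∑' k, Real.log (Nat.factorial k) * poissonPMF (μ₀ i) k)
    have h4 := (h1.add h2).sub h3
    rw [mul_one] at h4
    exact h4.congr_fun (fun y => by ring)
  have hB : ∀ i : Fin N, HasSum (fun y : Fin N → ℕ =>
      (-(yhat i y) - Real.log (Nat.factorial (y i))
        + (y i : ℝ) * Real.log (yhat i (Function.update y i (y i - 1)))) * poissonWeight μ₀ y)
      (-(∑' y : Fin N → ℕ, yhat i y * poissonWeight μ₀ y)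
        + μ₀ i * (∑' y : Fin N → ℕ, Real.log (yhat i y) * poissonWeight μ₀ y)
        - (∑' k, Real.log (Nat.factorial k) * poissonPMF (μ₀ i) k)) := by
    intro i
    have h1 := (s_yhat i).hasSum.neg
    have h2 := (hm2 i).neg
    have h3 := (s_yL' i).hasSum
    rw [stein hμ i (fun y => Real.log (yhat i y)) M (hlog i)] at h3
    have h4 := (h1.sub (hm2 i)).add h3
    have h5 : (-(∑' y : Fin N → ℕ, yhat i y * poissonWeight μ₀ y)
        + μ₀ i * (∑' y : Fin N → ℕ, Real.log (yhat i y) * poissonWeight μ₀ y)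
        - (∑' k, Real.log (Nat.factorial k) * poissonPMF (μ₀ i) k))
        = (-(∑' y : Fin N → ℕ, yhat i y * poissonWeight μ₀ y)
          - (∑' k, Real.log (Nat.factorial k) * poissonPMF (μ₀ i) k)
          + μ₀ i * (∑' y : Fin N → ℕ, Real.log (yhat i y) * poissonWeight μ₀ y)) := by ring
    rw [h5]
    exact h4.congr_fun (fun y => by ring)

  -- inner tsum formula
  have key1 : ∀ y : Fin N → ℕ,
      (∑' ystar : Fin N → ℕ,
        (∑ i, (-(yhat i y) + (ystar i : ℝ) * Real.log (yhat i y)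
          - Real.log (Nat.factorial (ystar i)))) * poissonWeight μ₀ ystar)
      = ∑ i, (-(yhat i y) + μ₀ i * Real.log (yhat i y)
          - (∑' k, Real.log (Nat.factorial k) * poissonPMF (μ₀ i) k)) := by
    intro y
    have hterm : ∀ i : Fin N, HasSum (fun ystar : Fin N → ℕ =>
        (-(yhat i y) + (ystar i : ℝ) * Real.log (yhat i y)
          - Real.log (Nat.factorial (ystar i))) * poissonWeight μ₀ ystar)
        (-(yhat i y) + μ₀ i * Real.log (yhat i y)
          - (∑' k, Real.log (Nat.factorial k) * poissonPMF (μ₀ i) k)) := by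
      intro i
      have h1 := (pois_hasSum (hμ i).le).mul_left (-(yhat i y))
      rw [mul_one] at h1
      have h2 := (pois_mean (hμ i).le).mul_right (Real.log (yhat i y))
      have h3 := (summable_logfact_pois (hμ i).le).hasSum
      have h4 := (h1.add h2).sub h3
      have h5 : HasSum (fun k : ℕ => (-(yhat i y) + (k : ℝ) * Real.log (yhat i y)
          - Real.log (Nat.factorial k)) * poissonPMF (μ₀ i) k)
          (-(yhat i y) + μ₀ i * Real.log (yhat i y)
            - (∑' k, Real.log (Nat.factorial k) * poissonPMF (μ₀ i) k)) :=
        h4.congr_fun (fun k => by ring)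
      have hmarg := marg hμ i (fun k => -(yhat i y) + (k : ℝ) * Real.log (yhat i y)
          - Real.log (Nat.factorial k)) h5.summable
      rwa [h5.tsum_eq] at hmarg
    have hfun : ∀ ystar : Fin N → ℕ,
        (∑ i, (-(yhat i y) + (ystar i : ℝ) * Real.log (yhat i y)
          - Real.log (Nat.factorial (ystar i)))) * poissonWeight μ₀ ystar
        = ∑ i, ((-(yhat i y) + (ystar i : ℝ) * Real.log (yhat i y)
          - Real.log (Nat.factorial (ystar i))) * poissonWeight μ₀ ystar) :=
      fun ystar => by rw [Finset.sum_mul]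
    rw [tsum_congr hfun]
    exact (hasSum_sum (fun i _ => hterm i)).tsum_eq
  -- summability of the per-i integrands of A and B
  have sA : ∀ i : Fin N, Summable (fun y : Fin N → ℕ =>
      (-(yhat i y) + (y i : ℝ) * Real.log (yhat i y)
        - Real.log (Nat.factorial (y i))) * poissonWeight μ₀ y) := by
    intro i
    have h := ((s_yhat i).neg.add (s_yL i)).sub (hm2 i).summable
    exact h.congr (fun y => by ring)
  have sB : ∀ i : Fin N, Summable (fun y : Fin N → ℕ =>
      ((y i : ℝ) * Real.log (yhat i y)
        - (y i : ℝ) * Real.log (yhat i (Function.update y i (y i - 1))))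
        * poissonWeight μ₀ y) := by
    intro i
    have h := (s_yL i).sub (s_yL' i)
    exact h.congr (fun y => by ring)
  -- difference identity per i
  have hVABi : ∀ i : Fin N,
      (∑' y : Fin N → ℕ, (-(yhat i y) + (y i : ℝ) * Real.log (yhat i y)
        - Real.log (Nat.factorial (y i))) * poissonWeight μ₀ y)
      - (∑' y : Fin N → ℕ, ((y i : ℝ) * Real.log (yhat i y)
        - (y i : ℝ) * Real.log (yhat i (Function.update y i (y i - 1))))
        * poissonWeight μ₀ y)
      = (-(∑' y : Fin N → ℕ, yhat i y * poissonWeight μ₀ y)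
        + μ₀ i * (∑' y : Fin N → ℕ, Real.log (yhat i y) * poissonWeight μ₀ y)
        - (∑' k, Real.log (Nat.factorial k) * poissonPMF (μ₀ i) k)) := by
    intro i
    refine HasSum.unique ?_ (hB i)
    exact ((sA i).hasSum.sub (sB i).hasSum).congr_fun (fun y => by ring)
  -- evaluate the three big tsums
  have e1 : (∑' y : Fin N → ℕ,
      (∑' ystar : Fin N → ℕ,
        (∑ i, (-(yhat i y) + (ystar i : ℝ) * Real.log (yhat i y)
          - Real.log (Nat.factorial (ystar i)))) * poissonWeight μ₀ ystar)
        * poissonWeight μ₀ y)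
      = ∑ i, (-(∑' y : Fin N → ℕ, yhat i y * poissonWeight μ₀ y)
        + μ₀ i * (∑' y : Fin N → ℕ, Real.log (yhat i y) * poissonWeight μ₀ y)
        - (∑' k, Real.log (Nat.factorial k) * poissonPMF (μ₀ i) k)) := by
    have hfun : ∀ y : Fin N → ℕ,
        (∑' ystar : Fin N → ℕ,
          (∑ i, (-(yhat i y) + (ystar i : ℝ) * Real.log (yhat i y)
            - Real.log (Nat.factorial (ystar i)))) * poissonWeight μ₀ ystar)
          * poissonWeight μ₀ y
        = ∑ i, ((-(yhat i y) + μ₀ i * Real.log (yhat i y)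
            - (∑' k, Real.log (Nat.factorial k) * poissonPMF (μ₀ i) k))
            * poissonWeight μ₀ y) := by
      intro y
      rw [key1 y, Finset.sum_mul]
    rw [tsum_congr hfun]
    exact (hasSum_sum (fun i _ => hA i)).tsum_eq
  have e2 : (∑' y : Fin N → ℕ,
      (∑ i, (-(yhat i y) + (y i : ℝ) * Real.log (yhat i y)
        - Real.log (Nat.factorial (y i)))) * poissonWeight μ₀ y)
      = ∑ i, ∑' y : Fin N → ℕ, (-(yhat i y) + (y i : ℝ) * Real.log (yhat i y)
        - Real.log (Nat.factorial (y i))) * poissonWeight μ₀ y := by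
    have hfun : ∀ y : Fin N → ℕ,
        (∑ i, (-(yhat i y) + (y i : ℝ) * Real.log (yhat i y)
          - Real.log (Nat.factorial (y i)))) * poissonWeight μ₀ y
        = ∑ i, ((-(yhat i y) + (y i : ℝ) * Real.log (yhat i y)
          - Real.log (Nat.factorial (y i))) * poissonWeight μ₀ y) :=
      fun y => by rw [Finset.sum_mul]
    rw [tsum_congr hfun]
    exact (hasSum_sum (fun i _ => (sA i).hasSum)).tsum_eq
  have e3 : (∑' y : Fin N → ℕ,
      (∑ i, ((y i : ℝ) * Real.log (yhat i y)
        - (y i : ℝ) * Real.log (yhat i (Function.update y i (y i - 1)))))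
        * poissonWeight μ₀ y)
      = ∑ i, ∑' y : Fin N → ℕ, ((y i : ℝ) * Real.log (yhat i y)
        - (y i : ℝ) * Real.log (yhat i (Function.update y i (y i - 1))))
        * poissonWeight μ₀ y := by
    have hfun : ∀ y : Fin N → ℕ,
        (∑ i, ((y i : ℝ) * Real.log (yhat i y)
          - (y i : ℝ) * Real.log (yhat i (Function.update y i (y i - 1)))))
          * poissonWeight μ₀ y
        = ∑ i, (((y i : ℝ) * Real.log (yhat i y)
          - (y i : ℝ) * Real.log (yhat i (Function.update y i (y i - 1))))
          * poissonWeight μ₀ y) :=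
      fun y => by rw [Finset.sum_mul]
    rw [tsum_congr hfun]
    exact (hasSum_sum (fun i _ => (sB i).hasSum)).tsum_eq
  rw [e1, e2, e3]
  have hsplit : ∑ i : Fin N, (-(∑' y : Fin N → ℕ, yhat i y * poissonWeight μ₀ y)
        + μ₀ i * (∑' y : Fin N → ℕ, Real.log (yhat i y) * poissonWeight μ₀ y)
        - (∑' k, Real.log (Nat.factorial k) * poissonPMF (μ₀ i) k))
      = (∑ i : Fin N, ∑' y : Fin N → ℕ, (-(yhat i y) + (y i : ℝ) * Real.log (yhat i y)
          - Real.log (Nat.factorial (y i))) * poissonWeight μ₀ y)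
        - ∑ i : Fin N, ∑' y : Fin N → ℕ, ((y i : ℝ) * Real.log (yhat i y)
          - (y i : ℝ) * Real.log (yhat i (Function.update y i (y i - 1))))
          * poissonWeight μ₀ y := by
    rw [← Finset.sum_sub_distrib]
    exact Finset.sum_congr rfl (fun i _ => (hVABi i).symm)
  rw [hsplit]
  ring
end

section
/- Let Y = (Y_1, …, Y_N) be independent Poisson with means μ_{0i} > 0 and ŷ_i : ℕ^N → [c, C], 0 < c ≤ C. Then E[∑_i (Y_i − μ_{0i}) log ŷ_i(Y)] = E[∑_i Y_i (log ŷ_i(Y) − log ŷ_i(Y^{(Y_i−1)}))]. -/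
open scoped BigOperators

set_option maxHeartbeats 1000000

lemma pmf_mul_summable (μ : ℝ) : Summable (fun k : ℕ => (k : ℝ) * poissonPMF μ k) := by
  rw [← summable_nat_add_iff 1]
  have : (fun k : ℕ => ((k + 1 : ℕ) : ℝ) * poissonPMF μ (k + 1))
      = fun k : ℕ => μ * poissonPMF μ k := by
    funext k; push_cast; rw [pmf_succ]
  rw [this]
  exact (pmf_summable μ).mul_left μ

lemma summable_pi_prod : ∀ (N : ℕ) (f : Fin N → ℕ → ℝ), (∀ i, Summable (f i)) →
    (∀ i k, 0 ≤ f i k) → Summable (fun y : Fin N → ℕ => ∏ i, f i (y i)) := by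
  intro N
  induction N with
  | zero => intro f _ _; exact .of_finite
  | succ n ih =>
    intro f hf hf0
    have hsum : Summable (fun p : ℕ × (Fin n → ℕ) => f 0 p.1 * ∏ i : Fin n, f i.succ (p.2 i)) :=
      by
        refine Summable.mul_of_nonneg (f := f 0)
          (g := fun z : Fin n → ℕ => ∏ i : Fin n, f i.succ (z i)) (hf 0) ?_ ?_ ?_
        · exact ih (fun i => f i.succ) (fun i => hf i.succ) (fun i k => hf0 i.succ k)
        · exact fun k => hf0 0 k
        · exact fun z => Finset.prod_nonneg fun i _ => hf0 _ _
    have heq : ((fun y : Fin (n+1) → ℕ => ∏ i, f i (y i)) ∘ (Fin.consEquiv (fun _ : Fin (n+1) => ℕ)))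
        = fun p : ℕ × (Fin n → ℕ) => f 0 p.1 * ∏ i : Fin n, f i.succ (p.2 i) := by
      funext p
      rw [Function.comp_apply, Fin.prod_univ_succ]
      simp [Fin.consEquiv]
    rw [← (Fin.consEquiv (fun _ : Fin (n+1) => ℕ)).summable_iff, heq]
    exact hsum

lemma weight_nonneg {N : ℕ} (μ : Fin N → ℝ) (hμ : ∀ i, 0 ≤ μ i) (y : Fin N → ℕ) :
    0 ≤ poissonWeight μ y :=
  Finset.prod_nonneg fun i _ => pmf_nonneg (hμ i) _

lemma weight_summable {N : ℕ} (μ : Fin N → ℝ) (hμ : ∀ i, 0 ≤ μ i) :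
    Summable (poissonWeight μ) :=
  summable_pi_prod N (fun i => poissonPMF (μ i)) (fun i => pmf_summable (μ i))
    (fun i k => pmf_nonneg (hμ i) k)

lemma weight_mul_summable {N : ℕ} (μ : Fin N → ℝ) (hμ : ∀ i, 0 ≤ μ i) (i : Fin N) :
    Summable (fun y : Fin N → ℕ => (y i : ℝ) * poissonWeight μ y) := by
  have h := summable_pi_prod N
    (fun j k => (if j = i then (k : ℝ) else 1) * poissonPMF (μ j) k)
    (fun j => by
      by_cases hj : j = i
      · subst hj; simpa using pmf_mul_summable (μ j)
      · simpa [hj] using pmf_summable (μ j))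
    (fun j k => by
      by_cases hj : j = i
      · subst hj; simp only [if_pos rfl]
        exact mul_nonneg (Nat.cast_nonneg k) (pmf_nonneg (hμ j) k)
      · simp [hj]; exact pmf_nonneg (hμ j) k)
  have heq : (fun y : Fin N → ℕ =>
        ∏ j, (if j = i then ((y j : ℕ) : ℝ) else 1) * poissonPMF (μ j) (y j))
      = fun y : Fin N → ℕ => (y i : ℝ) * poissonWeight μ y := by
    funext y
    rw [Finset.prod_mul_distrib, Finset.prod_ite_eq' Finset.univ i (fun j => ((y j : ℕ) : ℝ))]
    simp [poissonWeight]
  rwa [heq] at h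

lemma weight_update {N : ℕ} (μ : Fin N → ℝ) (y : Fin N → ℕ) (i : Fin N) (k : ℕ) :
    poissonWeight μ (Function.update y i k)
      = poissonPMF (μ i) k * ∏ j ∈ Finset.univ.erase i, poissonPMF (μ j) (y j) := by
  unfold poissonWeight
  rw [← Finset.mul_prod_erase Finset.univ _ (Finset.mem_univ i)]
  congr 1
  · rw [Function.update_self]
  · exact Finset.prod_congr rfl fun j hj => by
      rw [Function.update_of_ne (Finset.ne_of_mem_erase hj)]

/-- Key shift identity, per coordinate. -/
lemma shift_identity {N : ℕ} (μ : Fin N → ℝ) (i : Fin N) (h : (Fin N → ℕ) → ℝ) :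
    ∑' y : Fin N → ℕ, (y i : ℝ) * h (Function.update y i (y i - 1)) * poissonWeight μ y
      = μ i * ∑' y : Fin N → ℕ, h y * poissonWeight μ y := by
  set g : (Fin N → ℕ) → ℝ :=
    fun y => (y i : ℝ) * h (Function.update y i (y i - 1)) * poissonWeight μ y with hg
  set T : (Fin N → ℕ) → (Fin N → ℕ) := fun y => Function.update y i (y i + 1) with hT
  have hTinj : Function.Injective T := by
    intro y z hyz
    have hji : y i = z i := by
      have := congrFun hyz i
      simp only [T, Function.update_self] at this
      omega
    funext j
    by_cases hj : j = i
    · subst hj; exact hji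
    · have := congrFun hyz j
      simpa [T, Function.update_of_ne hj] using this
  have hsupp : Function.support g ⊆ Set.range T := by
    intro y hy
    have hyi : y i ≠ 0 := by
      intro h0
      apply hy
      simp [g, h0]
    refine ⟨Function.update y i (y i - 1), ?_⟩
    funext j
    by_cases hj : j = i
    · subst hj
      simp only [T, Function.update_self]
      omega
    · simp [T, Function.update_of_ne hj]
  have key := hTinj.tsum_eq (f := g) hsupp
  have hgT : ∀ y : Fin N → ℕ, g (T y) = μ i * (h y * poissonWeight μ y) := by
    intro y
    have h1 : (T y) i = y i + 1 := by simp [T]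
    have h2 : Function.update (T y) i ((T y) i - 1) = y := by
      funext j
      by_cases hj : j = i
      · subst hj; simp [T]
      · simp [T, Function.update_of_ne hj]
    have h3 : ((y i : ℝ) + 1) * poissonWeight μ (T y) = μ i * poissonWeight μ y := by
      have hw1 : poissonWeight μ (T y)
          = poissonPMF (μ i) (y i + 1) * ∏ j ∈ Finset.univ.erase i, poissonPMF (μ j) (y j) :=
        weight_update μ y i (y i + 1)
      have hw2 : poissonWeight μ y
          = poissonPMF (μ i) (y i) * ∏ j ∈ Finset.univ.erase i, poissonPMF (μ j) (y j) := by
        have := weight_update μ y i (y i)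
        rwa [Function.update_eq_self] at this
      rw [hw1, hw2, ← mul_assoc, ← mul_assoc]
      congr 1
      have := pmf_succ (μ i) (y i)
      linarith [this]
    show ((T y) i : ℝ) * h (Function.update (T y) i ((T y) i - 1)) * poissonWeight μ (T y)
        = μ i * (h y * poissonWeight μ y)
    rw [h2, h1]
    push_cast
    calc ((y i : ℝ) + 1) * h y * poissonWeight μ (T y)
        = h y * (((y i : ℝ) + 1) * poissonWeight μ (T y)) := by ring
      _ = h y * (μ i * poissonWeight μ y) := by rw [h3]
      _ = μ i * (h y * poissonWeight μ y) := by ring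
  calc ∑' y, g y = ∑' y, g (T y) := key.symm
    _ = ∑' y, μ i * (h y * poissonWeight μ y) := by
        apply tsum_congr; intro y; exact hgT y
    _ = μ i * ∑' y, h y * poissonWeight μ y := tsum_mul_left

lemma summable_bdd_mul_weight {N : ℕ} (μ : Fin N → ℝ) (hμ : ∀ i, 0 ≤ μ i)
    (h : (Fin N → ℕ) → ℝ) (M : ℝ) (hM : ∀ y, |h y| ≤ M) :
    Summable (fun y : Fin N → ℕ => h y * poissonWeight μ y) := by
  rw [← summable_abs_iff]
  refine Summable.of_nonneg_of_le (fun y => abs_nonneg _) ?_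
    ((weight_summable μ hμ).mul_left M)
  · intro y
    rw [abs_mul, abs_of_nonneg (weight_nonneg μ hμ y)]
    exact mul_le_mul_of_nonneg_right (hM y) (weight_nonneg μ hμ y)

lemma summable_coord_bdd_mul_weight {N : ℕ} (μ : Fin N → ℝ) (hμ : ∀ i, 0 ≤ μ i) (i : Fin N)
    (h : (Fin N → ℕ) → ℝ) (M : ℝ) (hM : ∀ y, |h y| ≤ M) :
    Summable (fun y : Fin N → ℕ => (y i : ℝ) * h y * poissonWeight μ y) := by
  rw [← summable_abs_iff]
  refine Summable.of_nonneg_of_le (fun y => abs_nonneg _) ?_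
    ((weight_mul_summable μ hμ i).mul_left M)
  · intro y
    rw [abs_mul, abs_mul, abs_of_nonneg (weight_nonneg μ hμ y),
      abs_of_nonneg (Nat.cast_nonneg (y i))]
    calc (y i : ℝ) * |h y| * poissonWeight μ y
        ≤ (y i : ℝ) * M * poissonWeight μ y := by
          apply mul_le_mul_of_nonneg_right _ (weight_nonneg μ hμ y)
          exact mul_le_mul_of_nonneg_left (hM y) (Nat.cast_nonneg (y i))
      _ = M * ((y i : ℝ) * poissonWeight μ y) := by ring

lemma abs_log_le_of_mem {c C x : ℝ} (hc : 0 < c) (hx : c ≤ x) (hxC : x ≤ C) :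
    |Real.log x| ≤ max |Real.log c| |Real.log C| := by
  rw [abs_le]
  constructor
  · calc -(max |Real.log c| |Real.log C|) ≤ -|Real.log c| := by
          exact neg_le_neg (le_max_left _ _)
      _ ≤ Real.log c := neg_abs_le _
      _ ≤ Real.log x := Real.log_le_log hc hx
  · calc Real.log x ≤ Real.log C := Real.log_le_log (lt_of_lt_of_le hc hx) hxC
      _ ≤ |Real.log C| := le_abs_self _
      _ ≤ max |Real.log c| |Real.log C| := le_max_right _ _

theorem core_identity {N : ℕ} (μ₀ : Fin N → ℝ) (hμ : ∀ i, 0 < μ₀ i)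
    (yhat : Fin N → (Fin N → ℕ) → ℝ) (c C : ℝ) (hc : 0 < c) (hcC : c ≤ C)
    (hbdd : ∀ i y, c ≤ yhat i y ∧ yhat i y ≤ C) :
    ∑' y : Fin N → ℕ,
        (∑ i, ((y i : ℝ) - μ₀ i) * Real.log (yhat i y)) * poissonWeight μ₀ y
      = ∑' y : Fin N → ℕ,
          (∑ i, (y i : ℝ) * (Real.log (yhat i y)
            - Real.log (yhat i (Function.update y i (y i - 1))))) *
            poissonWeight μ₀ y := by
  have hμ0 : ∀ i, 0 ≤ μ₀ i := fun i => (hμ i).le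
  set M : ℝ := max |Real.log c| |Real.log C| with hM
  have hlog : ∀ i y, |Real.log (yhat i y)| ≤ M := fun i y =>
    abs_log_le_of_mem hc (hbdd i y).1 (hbdd i y).2
  have S1 : ∀ i : Fin N, Summable (fun y : Fin N → ℕ =>
      Real.log (yhat i y) * poissonWeight μ₀ y) := fun i =>
    summable_bdd_mul_weight μ₀ hμ0 _ M (hlog i)
  have S2 : ∀ i : Fin N, Summable (fun y : Fin N → ℕ =>
      (y i : ℝ) * Real.log (yhat i y) * poissonWeight μ₀ y) := fun i =>
    summable_coord_bdd_mul_weight μ₀ hμ0 i _ M (hlog i)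
  have S3 : ∀ i : Fin N, Summable (fun y : Fin N → ℕ =>
      (y i : ℝ) * Real.log (yhat i (Function.update y i (y i - 1)))
        * poissonWeight μ₀ y) := fun i =>
    summable_coord_bdd_mul_weight μ₀ hμ0 i _ M (fun y => hlog i _)
  have SL : ∀ i : Fin N, Summable (fun y : Fin N → ℕ =>
      ((y i : ℝ) - μ₀ i) * Real.log (yhat i y) * poissonWeight μ₀ y) := by
    intro i
    have heq : (fun y : Fin N → ℕ =>
        ((y i : ℝ) - μ₀ i) * Real.log (yhat i y) * poissonWeight μ₀ y)
        = fun y : Fin N → ℕ => (y i : ℝ) * Real.log (yhat i y) * poissonWeight μ₀ y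
          - μ₀ i * (Real.log (yhat i y) * poissonWeight μ₀ y) := by
      funext y; ring
    rw [heq]
    exact (S2 i).sub ((S1 i).mul_left (μ₀ i))
  have SR : ∀ i : Fin N, Summable (fun y : Fin N → ℕ =>
      (y i : ℝ) * (Real.log (yhat i y)
        - Real.log (yhat i (Function.update y i (y i - 1)))) * poissonWeight μ₀ y) := by
    intro i
    have heq : (fun y : Fin N → ℕ =>
        (y i : ℝ) * (Real.log (yhat i y)
          - Real.log (yhat i (Function.update y i (y i - 1)))) * poissonWeight μ₀ y)
        = fun y : Fin N → ℕ => (y i : ℝ) * Real.log (yhat i y) * poissonWeight μ₀ y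
          - (y i : ℝ) * Real.log (yhat i (Function.update y i (y i - 1)))
            * poissonWeight μ₀ y := by
      funext y; ring
    rw [heq]
    exact (S2 i).sub (S3 i)
  have hLfun : (fun y : Fin N → ℕ =>
      (∑ i, ((y i : ℝ) - μ₀ i) * Real.log (yhat i y)) * poissonWeight μ₀ y)
      = fun y : Fin N → ℕ =>
        ∑ i, ((y i : ℝ) - μ₀ i) * Real.log (yhat i y) * poissonWeight μ₀ y := by
    funext y; rw [Finset.sum_mul]
  have hRfun : (fun y : Fin N → ℕ =>
      (∑ i, (y i : ℝ) * (Real.log (yhat i y)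
        - Real.log (yhat i (Function.update y i (y i - 1))))) * poissonWeight μ₀ y)
      = fun y : Fin N → ℕ =>
        ∑ i, (y i : ℝ) * (Real.log (yhat i y)
          - Real.log (yhat i (Function.update y i (y i - 1)))) * poissonWeight μ₀ y := by
    funext y; rw [Finset.sum_mul]
  rw [hLfun, hRfun, Summable.tsum_finsetSum (fun i _ => SL i), Summable.tsum_finsetSum (fun i _ => SR i)]
  apply Finset.sum_congr rfl
  intro i _
  have eqL : (fun y : Fin N → ℕ =>
      ((y i : ℝ) - μ₀ i) * Real.log (yhat i y) * poissonWeight μ₀ y)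
      = fun y : Fin N → ℕ => (y i : ℝ) * Real.log (yhat i y) * poissonWeight μ₀ y
        - μ₀ i * (Real.log (yhat i y) * poissonWeight μ₀ y) := by
    funext y; ring
  have eqR : (fun y : Fin N → ℕ =>
      (y i : ℝ) * (Real.log (yhat i y)
        - Real.log (yhat i (Function.update y i (y i - 1)))) * poissonWeight μ₀ y)
      = fun y : Fin N → ℕ => (y i : ℝ) * Real.log (yhat i y) * poissonWeight μ₀ y
        - (y i : ℝ) * Real.log (yhat i (Function.update y i (y i - 1)))
          * poissonWeight μ₀ y := by
    funext y; ring
  rw [eqL, eqR, Summable.tsum_sub (S2 i) ((S1 i).mul_left (μ₀ i)), Summable.tsum_sub (S2 i) (S3 i),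
    tsum_mul_left, shift_identity μ₀ i (fun z => Real.log (yhat i z))]
end
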